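/- Let T and T' be 2×2 unitary matrices with the same overlap, max_{k,l=1,2} |T_{lk}| = max_{k,l=1,2} |T'_{lk}|. Then for all α, β ≥ 0, the infimum over unit vectors ψ ∈ ℂ² of H_α(|ψ|²) + H_β(|Tψ|²) equals the infimum over unit vectors ψ of H_α(|ψ|²) + H_β(|T'ψ|²); i.e., the tight lower bound of the Rényi entropy sum depends on T only through its overlap. -/

import Mathlib

open Real

/-- Power with the convention `0 ^ λ = 0` for all `λ ≥ 0`. -/
noncomputable def pw (p lam : ℝ) : ℝ := if p = 0 then 0 else p ^ lam

/-- Rényi entropy of the two-point probability vector `(p₁, p₂)`: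
`H_λ(p) = (1/(1-λ)) log (p₁^λ + p₂^λ)` for `λ ≠ 1`, Shannon entropy for `λ = 1`. -/
noncomputable def Hren (lam p1 p2 : ℝ) : ℝ :=
  if lam = 1 then -(p1 * Real.log p1 + p2 * Real.log p2)
  else (1 - lam)⁻¹ * Real.log (pw p1 lam + pw p2 lam)

private lemma Hren_comm (lam p q : ℝ) : Hren lam p q = Hren lam q p := by
  unfold Hren
  split
  · ring
  · rw [add_comm (pw p lam)]

private lemma abs_of_normSq {x y : ℂ} (h : Complex.normSq x = Complex.normSq y) :
    ‖x‖ = ‖y‖ := by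
  rw [Complex.norm_def, Complex.norm_def, h]

private lemma abs_lin {x y x' y' : ℂ} (hx : ‖x‖ = ‖x'‖)
    (hy : ‖y‖ = ‖y'‖)
    (hxy : x * (starRingEnd ℂ) y = x' * (starRingEnd ℂ) y') (ψ0 ψ1 : ℂ) :
    ‖x * ψ0 + y * ψ1‖ = ‖x' * ψ0 + y' * ψ1‖ := by
  have hx2 : Complex.normSq x = Complex.normSq x' := by
    rw [← Complex.sq_norm, ← Complex.sq_norm, hx]
  have hy2 : Complex.normSq y = Complex.normSq y' := by
    rw [← Complex.sq_norm, ← Complex.sq_norm, hy]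
  apply abs_of_normSq
  have r1 : x * ψ0 * (starRingEnd ℂ) (y * ψ1)
      = (x * (starRingEnd ℂ) y) * (ψ0 * (starRingEnd ℂ) ψ1) := by rw [map_mul]; ring
  have r2 : x' * ψ0 * (starRingEnd ℂ) (y' * ψ1)
      = (x' * (starRingEnd ℂ) y') * (ψ0 * (starRingEnd ℂ) ψ1) := by rw [map_mul]; ring
  rw [Complex.normSq_add, Complex.normSq_add, Complex.normSq_mul, Complex.normSq_mul,
    Complex.normSq_mul, Complex.normSq_mul, hx2, hy2, r1, r2, hxy]

private lemma unitary_entries (T : Matrix (Fin 2) (Fin 2) ℂ)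
    (hT : T ∈ Matrix.unitaryGroup (Fin 2) ℂ) :
    ‖T 1 1‖ = ‖T 0 0‖ ∧
    ‖T 1 0‖ = ‖T 0 1‖ ∧
    ‖T 0 0‖ ^ 2 + ‖T 0 1‖ ^ 2 = 1 ∧
    T 1 0 * (starRingEnd ℂ) (T 1 1) = -(T 0 0 * (starRingEnd ℂ) (T 0 1)) := by
  obtain ⟨h1, h2⟩ := hT
  have e00 : (star T * T) 0 0 = (1 : Matrix (Fin 2) (Fin 2) ℂ) 0 0 := by rw [h1]
  have e01 : (star T * T) 0 1 = (1 : Matrix (Fin 2) (Fin 2) ℂ) 0 1 := by rw [h1]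
  have e11 : (star T * T) 1 1 = (1 : Matrix (Fin 2) (Fin 2) ℂ) 1 1 := by rw [h1]
  have f00 : (T * star T) 0 0 = (1 : Matrix (Fin 2) (Fin 2) ℂ) 0 0 := by rw [h2]
  have f11 : (T * star T) 1 1 = (1 : Matrix (Fin 2) (Fin 2) ℂ) 1 1 := by rw [h2]
  simp only [Matrix.mul_apply, Fin.sum_univ_two, Matrix.star_apply, Matrix.one_apply_eq,
    Matrix.one_apply_ne (by decide : (0 : Fin 2) ≠ 1), RCLike.star_def] at e00 e01 e11 f00 f11
  simp only [← Complex.normSq_eq_conj_mul_self, Complex.mul_conj] at e00 e11 f00 f11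
  have n00 : Complex.normSq (T 0 0) + Complex.normSq (T 1 0) = 1 := by exact_mod_cast e00
  have n11 : Complex.normSq (T 0 1) + Complex.normSq (T 1 1) = 1 := by exact_mod_cast e11
  have m00 : Complex.normSq (T 0 0) + Complex.normSq (T 0 1) = 1 := by exact_mod_cast f00
  have m11 : Complex.normSq (T 1 0) + Complex.normSq (T 1 1) = 1 := by exact_mod_cast f11
  refine ⟨abs_of_normSq (by linarith), abs_of_normSq (by linarith), ?_, ?_⟩
  · rw [Complex.sq_norm, Complex.sq_norm]; exact m00
  · have := congrArg (starRingEnd ℂ) e01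
    simp only [map_add, map_mul, map_zero, Complex.conj_conj] at this
    linear_combination this

private lemma overlap_eq (T : Matrix (Fin 2) (Fin 2) ℂ) (c : ℝ)
    (hc : IsGreatest {x : ℝ | ∃ k l : Fin 2, x = ‖T l k‖} c)
    (h11 : ‖T 1 1‖ = ‖T 0 0‖)
    (h10 : ‖T 1 0‖ = ‖T 0 1‖) :
    c = max (‖T 0 0‖) (‖T 0 1‖) := by
  obtain ⟨⟨k, l, hkl⟩, hub⟩ := hc
  have hm0 : ‖T 0 0‖ ≤ c := hub ⟨0, 0, rfl⟩
  have hm1 : ‖T 0 1‖ ≤ c := hub ⟨1, 0, rfl⟩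
  apply le_antisymm _ (max_le hm0 hm1)
  rw [hkl]
  fin_cases k <;> fin_cases l <;> simp [h11, h10, le_max_left, le_max_right]

private lemma sqrt_eq_of_sq {v v' : ℝ} (hv : 0 ≤ v) (hv' : 0 ≤ v') (h : v ^ 2 = v' ^ 2) :
    v = v' := by
  rw [← Real.sqrt_sq hv, h, Real.sqrt_sq hv']

/-- The key matching lemma. -/
private lemma match_lemma (T T' : Matrix (Fin 2) (Fin 2) ℂ)
    (hT : T ∈ Matrix.unitaryGroup (Fin 2) ℂ)
    (hT' : T' ∈ Matrix.unitaryGroup (Fin 2) ℂ)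
    (c : ℝ)
    (hc : IsGreatest {x : ℝ | ∃ k l : Fin 2, x = ‖T l k‖} c)
    (hc' : IsGreatest {x : ℝ | ∃ k l : Fin 2, x = ‖T' l k‖} c)
    (ψ : Fin 2 → ℂ) :
    ∃ φ : Fin 2 → ℂ,
      ((‖φ 0‖ = ‖ψ 0‖ ∧ ‖φ 1‖ = ‖ψ 1‖) ∨
       (‖φ 0‖ = ‖ψ 1‖ ∧ ‖φ 1‖ = ‖ψ 0‖)) ∧
      ‖T'.mulVec φ 0‖ = ‖T.mulVec ψ 0‖ ∧
      ‖T'.mulVec φ 1‖ = ‖T.mulVec ψ 1‖ := by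
  obtain ⟨h11, h10, hnorm, hcd⟩ := unitary_entries T hT
  obtain ⟨h11', h10', hnorm', hcd'⟩ := unitary_entries T' hT'
  set a := T 0 0; set b := T 0 1; set cc := T 1 0; set d := T 1 1
  set a' := T' 0 0; set b' := T' 0 1; set cc' := T' 1 0; set d' := T' 1 1
  have hover := (overlap_eq T c hc h11 h10).symm.trans (overlap_eq T' c hc' h11' h10')
  have ha0 : (0:ℝ) ≤ ‖a‖ := norm_nonneg _
  have hb0 : (0:ℝ) ≤ ‖b‖ := norm_nonneg _
  have ha0' : (0:ℝ) ≤ ‖a'‖ := norm_nonneg _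
  have hb0' : (0:ℝ) ≤ ‖b'‖ := norm_nonneg _
  have hmv : ∀ i ξ, T.mulVec ξ i = T i 0 * ξ 0 + T i 1 * ξ 1 := by
    intro i ξ; simp [Matrix.mulVec, dotProduct, Fin.sum_univ_two]
  have hmv' : ∀ i ξ, T'.mulVec ξ i = T' i 0 * ξ 0 + T' i 1 * ξ 1 := by
    intro i ξ; simp [Matrix.mulVec, dotProduct, Fin.sum_univ_two]
  have hcases : (‖a'‖ = ‖a‖ ∧ ‖b'‖ = ‖b‖) ∨
      (‖a'‖ = ‖b‖ ∧ ‖b'‖ = ‖a‖) := by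
    rcases le_total (‖a‖) (‖b‖) with h | h <;>
      rcases le_total (‖a'‖) (‖b'‖) with h' | h'
    · left
      have e1 : ‖b'‖ = ‖b‖ := by
        rw [max_eq_right h, max_eq_right h'] at hover; exact hover.symm
      exact ⟨sqrt_eq_of_sq ha0' ha0 (by nlinarith), e1⟩
    · right
      have e1 : ‖a'‖ = ‖b‖ := by
        rw [max_eq_right h, max_eq_left h'] at hover; exact hover.symm
      exact ⟨e1, sqrt_eq_of_sq hb0' ha0 (by nlinarith)⟩
    · right
      have e1 : ‖b'‖ = ‖a‖ := by
        rw [max_eq_left h, max_eq_right h'] at hover; exact hover.symm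
      exact ⟨sqrt_eq_of_sq ha0' hb0 (by nlinarith), e1⟩
    · left
      have e1 : ‖a'‖ = ‖a‖ := by
        rw [max_eq_left h, max_eq_left h'] at hover; exact hover.symm
      exact ⟨e1, sqrt_eq_of_sq hb0' hb0 (by nlinarith)⟩
  rcases hcases with ⟨ea, eb⟩ | ⟨ea, eb⟩
  · -- same order
    set e₀ : ℂ := if a = 0 then 1 else a / a' with he₀def
    set e₁ : ℂ := if b = 0 then 1 else b / b' with he₁def
    have he₀ : ‖e₀‖ = 1 := by
      rw [he₀def]; split
      · simp
      · rename_i ha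
        have ha' : a' ≠ 0 := by
          intro h0; apply ha
          have : ‖a‖ = 0 := by rw [← ea, h0, norm_zero]
          exact norm_eq_zero.mp this
        rw [norm_div, ea, div_self]
        intro h0; exact ha (norm_eq_zero.mp h0)
    have he₁ : ‖e₁‖ = 1 := by
      rw [he₁def]; split
      · simp
      · rename_i hb
        have hb' : b' ≠ 0 := by
          intro h0; apply hb
          have : ‖b‖ = 0 := by rw [← eb, h0, norm_zero]
          exact norm_eq_zero.mp this
        rw [norm_div, eb, div_self]
        intro h0; exact hb (norm_eq_zero.mp h0)
    have hxa : ‖a' * e₀‖ = ‖a‖ := by rw [norm_mul, he₀, mul_one, ea]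
    have hxb : ‖b' * e₁‖ = ‖b‖ := by rw [norm_mul, he₁, mul_one, eb]
    have hxc : ‖cc' * e₀‖ = ‖cc‖ := by
      rw [norm_mul, he₀, mul_one, h10', eb, ← h10]
    have hxd : ‖d' * e₁‖ = ‖d‖ := by
      rw [norm_mul, he₁, mul_one, h11', ea, ← h11]
    have cross1 : (a' * e₀) * (starRingEnd ℂ) (b' * e₁) = a * (starRingEnd ℂ) b := by
      by_cases ha : a = 0
      · have ha' : a' = 0 := by
          apply norm_eq_zero.mp; rw [ea, ha, norm_zero]
        simp [ha, ha']
      · by_cases hb : b = 0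
        · have hb' : b' = 0 := by
            apply norm_eq_zero.mp; rw [eb, hb, norm_zero]
          simp [hb, hb']
        · have ha' : a' ≠ 0 := by
            intro h0; apply ha
            apply norm_eq_zero.mp; rw [← ea, h0, norm_zero]
          have hb' : b' ≠ 0 := by
            intro h0; apply hb
            apply norm_eq_zero.mp; rw [← eb, h0, norm_zero]
          have r1 : a' * e₀ = a := by rw [he₀def, if_neg ha]; field_simp
          have r2 : b' * e₁ = b := by rw [he₁def, if_neg hb]; field_simp
          rw [r1, r2]
    have cross2 : (cc' * e₀) * (starRingEnd ℂ) (d' * e₁) = cc * (starRingEnd ℂ) d := by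
      have ex1 : (cc' * e₀) * (starRingEnd ℂ) (d' * e₁)
          = (cc' * (starRingEnd ℂ) d') * (e₀ * (starRingEnd ℂ) e₁) := by rw [map_mul]; ring
      have ex2 : -(a' * (starRingEnd ℂ) b') * (e₀ * (starRingEnd ℂ) e₁)
          = -((a' * e₀) * (starRingEnd ℂ) (b' * e₁)) := by rw [map_mul]; ring
      rw [ex1, hcd', ex2, cross1, ← hcd]
    refine ⟨![e₀ * ψ 0, e₁ * ψ 1], Or.inl ⟨?_, ?_⟩, ?_, ?_⟩
    · show ‖e₀ * ψ 0‖ = _; rw [norm_mul, he₀, one_mul]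
    · show ‖e₁ * ψ 1‖ = _; rw [norm_mul, he₁, one_mul]
    · have hφ0 : T'.mulVec ![e₀ * ψ 0, e₁ * ψ 1] 0 = (a' * e₀) * ψ 0 + (b' * e₁) * ψ 1 := by
        rw [hmv']; show a' * (e₀ * ψ 0) + b' * (e₁ * ψ 1) = _; ring
      rw [hφ0, hmv]
      exact abs_lin hxa hxb cross1 (ψ 0) (ψ 1)
    · have hφ1 : T'.mulVec ![e₀ * ψ 0, e₁ * ψ 1] 1 = (cc' * e₀) * ψ 0 + (d' * e₁) * ψ 1 := by
        rw [hmv']; show cc' * (e₀ * ψ 0) + d' * (e₁ * ψ 1) = _; ring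
      rw [hφ1, hmv]
      exact abs_lin hxc hxd cross2 (ψ 0) (ψ 1)
  · -- swapped order
    set e₀ : ℂ := if b = 0 then 1 else b / a' with he₀def
    set e₁ : ℂ := if a = 0 then 1 else a / b' with he₁def
    have he₀ : ‖e₀‖ = 1 := by
      rw [he₀def]; split
      · simp
      · rename_i hb
        have ha' : a' ≠ 0 := by
          intro h0; apply hb
          apply norm_eq_zero.mp; rw [← ea, h0, norm_zero]
        rw [norm_div, ea, div_self]
        intro h0; exact hb (norm_eq_zero.mp h0)
    have he₁ : ‖e₁‖ = 1 := by
      rw [he₁def]; split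
      · simp
      · rename_i ha
        have hb' : b' ≠ 0 := by
          intro h0; apply ha
          apply norm_eq_zero.mp; rw [← eb, h0, norm_zero]
        rw [norm_div, eb, div_self]
        intro h0; exact ha (norm_eq_zero.mp h0)
    have hxa : ‖b' * e₁‖ = ‖a‖ := by rw [norm_mul, he₁, mul_one, eb]
    have hya : ‖a' * e₀‖ = ‖b‖ := by rw [norm_mul, he₀, mul_one, ea]
    have hxc : ‖d' * e₁‖ = ‖cc‖ := by
      rw [norm_mul, he₁, mul_one, h11', ea, ← h10]
    have hyc : ‖cc' * e₀‖ = ‖d‖ := by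
      rw [norm_mul, he₀, mul_one, h10', eb, ← h11]
    have cross1 : (b' * e₁) * (starRingEnd ℂ) (a' * e₀) = a * (starRingEnd ℂ) b := by
      by_cases ha : a = 0
      · have hb' : b' = 0 := by
          apply norm_eq_zero.mp; rw [eb, ha, norm_zero]
        simp [ha, hb']
      · by_cases hb : b = 0
        · have ha' : a' = 0 := by
            apply norm_eq_zero.mp; rw [ea, hb, norm_zero]
          simp [hb, ha']
        · have ha' : a' ≠ 0 := by
            intro h0; apply hb
            apply norm_eq_zero.mp; rw [← ea, h0, norm_zero]
          have hb' : b' ≠ 0 := by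
            intro h0; apply ha
            apply norm_eq_zero.mp; rw [← eb, h0, norm_zero]
          have r1 : b' * e₁ = a := by rw [he₁def, if_neg ha]; field_simp
          have r2 : a' * e₀ = b := by rw [he₀def, if_neg hb]; field_simp
          rw [r1, r2]
    have cross2 : (d' * e₁) * (starRingEnd ℂ) (cc' * e₀) = cc * (starRingEnd ℂ) d := by
      have hcdc' : (starRingEnd ℂ) cc' * d' = -((starRingEnd ℂ) a' * b') := by
        have := congrArg (starRingEnd ℂ) hcd'
        simpa [map_mul, map_neg] using this
      have ex1 : (d' * e₁) * (starRingEnd ℂ) (cc' * e₀)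
          = ((starRingEnd ℂ) cc' * d') * (e₁ * (starRingEnd ℂ) e₀) := by rw [map_mul]; ring
      have ex2 : -((starRingEnd ℂ) a' * b') * (e₁ * (starRingEnd ℂ) e₀)
          = -((b' * e₁) * (starRingEnd ℂ) (a' * e₀)) := by rw [map_mul]; ring
      rw [ex1, hcdc', ex2, cross1, ← hcd]
    refine ⟨![e₀ * ψ 1, e₁ * ψ 0], Or.inr ⟨?_, ?_⟩, ?_, ?_⟩
    · show ‖e₀ * ψ 1‖ = _; rw [norm_mul, he₀, one_mul]
    · show ‖e₁ * ψ 0‖ = _; rw [norm_mul, he₁, one_mul]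
    · have hφ0 : T'.mulVec ![e₀ * ψ 1, e₁ * ψ 0] 0 = (b' * e₁) * ψ 0 + (a' * e₀) * ψ 1 := by
        rw [hmv']; show a' * (e₀ * ψ 1) + b' * (e₁ * ψ 0) = _; ring
      rw [hφ0, hmv]
      exact abs_lin hxa hya cross1 (ψ 0) (ψ 1)
    · have hφ1 : T'.mulVec ![e₀ * ψ 1, e₁ * ψ 0] 1 = (d' * e₁) * ψ 0 + (cc' * e₀) * ψ 1 := by
        rw [hmv']; show cc' * (e₀ * ψ 1) + d' * (e₁ * ψ 0) = _; ring
      rw [hφ1, hmv]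
      exact abs_lin hxc hyc cross2 (ψ 0) (ψ 1)

/-- the tight bound depends on `T` only through its overlap. -/
theorem stmt_8 (T T' : Matrix (Fin 2) (Fin 2) ℂ)
    (hT : T ∈ Matrix.unitaryGroup (Fin 2) ℂ)
    (hT' : T' ∈ Matrix.unitaryGroup (Fin 2) ℂ)
    (c : ℝ)
    (hc : IsGreatest {x : ℝ | ∃ k l : Fin 2, x = ‖T l k‖} c)
    (hc' : IsGreatest {x : ℝ | ∃ k l : Fin 2, x = ‖T' l k‖} c)
    (α β : ℝ) (hα : 0 ≤ α) (hβ : 0 ≤ β) :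
    sInf {x : ℝ | ∃ ψ : Fin 2 → ℂ,
        ‖ψ 0‖ ^ 2 + ‖ψ 1‖ ^ 2 = 1 ∧
        x = Hren α (‖ψ 0‖ ^ 2) (‖ψ 1‖ ^ 2) +
          Hren β (‖T.mulVec ψ 0‖ ^ 2) (‖T.mulVec ψ 1‖ ^ 2)} =
    sInf {x : ℝ | ∃ ψ : Fin 2 → ℂ,
        ‖ψ 0‖ ^ 2 + ‖ψ 1‖ ^ 2 = 1 ∧
        x = Hren α (‖ψ 0‖ ^ 2) (‖ψ 1‖ ^ 2) +
          Hren β (‖T'.mulVec ψ 0‖ ^ 2) (‖T'.mulVec ψ 1‖ ^ 2)} := by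
  have key : ∀ (A B : Matrix (Fin 2) (Fin 2) ℂ),
      A ∈ Matrix.unitaryGroup (Fin 2) ℂ → B ∈ Matrix.unitaryGroup (Fin 2) ℂ →
      IsGreatest {x : ℝ | ∃ k l : Fin 2, x = ‖A l k‖} c →
      IsGreatest {x : ℝ | ∃ k l : Fin 2, x = ‖B l k‖} c →
      {x : ℝ | ∃ ψ : Fin 2 → ℂ,
        ‖ψ 0‖ ^ 2 + ‖ψ 1‖ ^ 2 = 1 ∧
        x = Hren α (‖ψ 0‖ ^ 2) (‖ψ 1‖ ^ 2) +
          Hren β (‖A.mulVec ψ 0‖ ^ 2) (‖A.mulVec ψ 1‖ ^ 2)} ⊆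
      {x : ℝ | ∃ ψ : Fin 2 → ℂ,
        ‖ψ 0‖ ^ 2 + ‖ψ 1‖ ^ 2 = 1 ∧
        x = Hren α (‖ψ 0‖ ^ 2) (‖ψ 1‖ ^ 2) +
          Hren β (‖B.mulVec ψ 0‖ ^ 2) (‖B.mulVec ψ 1‖ ^ 2)} := by
    intro A B hA hB hcA hcB x hx
    obtain ⟨ψ, hψ, rfl⟩ := hx
    obtain ⟨φ, hm, h0, h1⟩ := match_lemma A B hA hB c hcA hcB ψ
    rcases hm with ⟨m0, m1⟩ | ⟨m0, m1⟩
    · exact ⟨φ, by rw [m0, m1]; exact hψ, by rw [m0, m1, h0, h1]⟩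
    · refine ⟨φ, by rw [m0, m1, add_comm]; exact hψ, ?_⟩
      rw [m0, m1, h0, h1, Hren_comm α]
  refine congrArg sInf (Set.Subset.antisymm ?_ ?_)
  · exact key T T' hT hT' hc hc'
  · exact key T' T hT' hT hc' hc
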